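/- E_φ is an ideal of E: for every d ∈ E and every x ∈ E_φ, the product d·x in ℤ[E×] lies in E_φ ∪ {0}. -/

import Mathlib

set_option linter.unusedSectionVars false

/-- A *semilattice with zero*: a commutative idempotent semigroup with an
absorbing element `0`. -/
class SemilatticeWithZero (E : Type) extends CommSemigroup E, Zero E where
  mul_idem : ∀ e : E, e * e = e
  zero_mul : ∀ e : E, 0 * e = 0

namespace IndRes

variable {E : Type} [SemilatticeWithZero E]

/-- `single e c`, viewed in the semigroup algebra `ℤ[E]`. -/
noncomputable def sgl (e : E) (c : ℤ) : MonoidAlgebra ℤ E := MonoidAlgebra.single e c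

/-- Truncation map deleting the coefficient at `0`. -/
noncomputable def T (x : MonoidAlgebra ℤ E) : MonoidAlgebra ℤ E := x - sgl 0 (x.coeff 0)

lemma sgl_apply_self (e : E) (c : ℤ) : (sgl e c).coeff e = c := Finsupp.single_eq_same

lemma sgl_apply_ne (e d : E) (c : ℤ) (h : e ≠ d) : (sgl e c).coeff d = 0 := Finsupp.single_eq_of_ne (Ne.symm h)

lemma sgl_add (e : E) (c d : ℤ) : sgl e (c + d) = sgl e c + sgl e d := MonoidAlgebra.ext (Finsupp.single_add e c d)

lemma sgl_sub (e : E) (c d : ℤ) : sgl e (c - d) = sgl e c - sgl e d := MonoidAlgebra.ext (Finsupp.single_sub e c d)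

lemma T_apply_zero (x : MonoidAlgebra ℤ E) : (T x).coeff 0 = 0 := by
  show ((x - sgl 0 (x.coeff 0) : MonoidAlgebra ℤ E)).coeff 0 = 0
  rw [MonoidAlgebra.coeff_sub, Finsupp.sub_apply, sgl_apply_self, sub_self]

/-- `ℤ[E^×]`, realized as the additive subgroup of the semigroup algebra
`ℤ[E]` consisting of the elements whose coefficient at `0` vanishes; it is the free
`ℤ`-module with basis `E^× = E \ {0}`. -/
noncomputable def ZS (E : Type) [SemilatticeWithZero E] : AddSubgroup (MonoidAlgebra ℤ E) where
  carrier := {x | x.coeff 0 = 0}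
  zero_mem' := rfl
  add_mem' := by
    intro a b ha hb
    simp only [Set.mem_setOf_eq] at *
    rw [MonoidAlgebra.coeff_add, Finsupp.add_apply, ha, hb, add_zero]
  neg_mem' := by
    intro a ha
    simp only [Set.mem_setOf_eq] at *
    rw [MonoidAlgebra.coeff_neg, Finsupp.neg_apply, ha, neg_zero]

/-- The integral semigroup ring `ℤ[E^×]`. -/
abbrev ZE (E : Type) [SemilatticeWithZero E] : Type := ↥(ZS E)

lemma mem_ZS {x : MonoidAlgebra ℤ E} : x ∈ ZS E ↔ x.coeff 0 = 0 := Iff.rfl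

lemma T_eq_self {x : MonoidAlgebra ℤ E} (h : x.coeff 0 = 0) : T x = x := by
  simp [T, h, sgl]

lemma T_add (a b : MonoidAlgebra ℤ E) : T (a + b) = T a + T b := by
  unfold T
  rw [show ((a + b).coeff 0) = a.coeff 0 + b.coeff 0 from Finsupp.add_apply a.coeff b.coeff 0, sgl_add]
  abel

lemma T_sub_sgl (x : MonoidAlgebra ℤ E) (m : ℤ) : T (x - sgl 0 m) = T x := by
  unfold T
  have h : ((x - sgl 0 m : MonoidAlgebra ℤ E)).coeff 0 = x.coeff 0 - m := by
    rw [MonoidAlgebra.coeff_sub, Finsupp.sub_apply, sgl_apply_self]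
  rw [h, sgl_sub]
  abel

lemma single_zero_mul (c : ℤ) (b : MonoidAlgebra ℤ E) :
    (sgl 0 c) * b = sgl 0 (((sgl 0 c * b : MonoidAlgebra ℤ E)).coeff 0) := by
  classical
  ext d
  by_cases hd : d = 0
  · subst hd; rw [sgl_apply_self]
  · rw [sgl_apply_ne 0 d _ (Ne.symm hd)]
    by_contra h
    have hmem : d ∈ ((sgl (0:E) c) * b).coeff.support := Finsupp.mem_support_iff.mpr h
    have h2 := MonoidAlgebra.support_coeff_mul_subset (sgl (0:E) c) b hmem
    rw [Finset.mem_mul] at h2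
    obtain ⟨a, ha, b', _, hab⟩ := h2
    have ha' : a = 0 := by
      have := Finsupp.support_single_subset (ha : a ∈ (Finsupp.single (0:E) c).support)
      simpa using this
    exact hd (by rw [← hab, ha', SemilatticeWithZero.zero_mul])

lemma T_mul_left (a b : MonoidAlgebra ℤ E) : T (T a * b) = T (a * b) := by
  have h1 : T a * b = a * b - (sgl 0 (a.coeff 0)) * b := by rw [T, sub_mul]
  rw [h1, single_zero_mul, T_sub_sgl]

lemma T_mul_right (a b : MonoidAlgebra ℤ E) : T (a * T b) = T (a * b) := by
  rw [mul_comm a (T b), T_mul_left, mul_comm]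

noncomputable instance : Mul (ZE E) :=
  ⟨fun x y => ⟨T (x.1 * y.1), T_apply_zero _⟩⟩

lemma ZE.val_mul (x y : ZE E) : (x * y).1 = T (x.1 * y.1) := rfl

noncomputable instance : NonUnitalCommRing (ZE E) :=
  { (inferInstance : AddCommGroup (ZE E)) with
    mul := (· * ·)
    left_distrib := by
      intro x y z
      apply Subtype.ext
      show T (x.1 * (y.1 + z.1)) = T (x.1 * y.1) + T (x.1 * z.1)
      rw [mul_add, T_add]
    right_distrib := by
      intro x y z
      apply Subtype.ext
      show T ((x.1 + y.1) * z.1) = T (x.1 * z.1) + T (y.1 * z.1)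
      rw [add_mul, T_add]
    zero_mul := by
      intro x
      apply Subtype.ext
      show T ((0 : MonoidAlgebra ℤ E) * x.1) = 0
      rw [zero_mul]
      simp [T, sgl]
    mul_zero := by
      intro x
      apply Subtype.ext
      show T (x.1 * (0 : MonoidAlgebra ℤ E)) = 0
      rw [mul_zero]
      simp [T, sgl]
    mul_assoc := by
      intro x y z
      apply Subtype.ext
      show T (T (x.1 * y.1) * z.1) = T (x.1 * T (y.1 * z.1))
      rw [T_mul_left, T_mul_right, mul_assoc]
    mul_comm := by
      intro x y
      apply Subtype.ext
      show T (x.1 * y.1) = T (y.1 * x.1)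
      rw [mul_comm] }

/-- The canonical image of `e ∈ E` in `ℤ[E^×]`: the basis element `e` if `e ≠ 0`,
and `0` if `e = 0`. -/
noncomputable def elt (e : E) : ZE E := ⟨T (sgl e 1), T_apply_zero _⟩

/-- Product of a (nonempty) finite family in a commutative non-unital ring, computed inside
the unitization.  For a nonempty index set this is the iterated product. -/
noncomputable def nprod {ι A : Type} [NonUnitalCommRing A] (s : Finset ι) (f : ι → A) : A :=
  (∏ j ∈ s, (Unitization.inr (f j) : Unitization ℤ A)).snd

/-- The join `⋁_{j ∈ J} x_j = ∑_{∅ ≠ J' ⊆ J} (-1)^{|J'|+1} ∏_{j ∈ J'} x_j`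
of a finite family of idempotents of a commutative non-unital ring. -/
noncomputable def rjoin {ι A : Type} [NonUnitalCommRing A] (s : Finset ι) (f : ι → A) : A :=
  ∑ t ∈ s.powerset.filter (fun t => t.Nonempty), ((-1 : ℤ) ^ (t.card + 1)) • nprod t f

/-- The join `⋁_{j ∈ J} e_j ∈ ℤ[E^×]` of a finite family of elements of `E`:
`∑_{∅ ≠ J' ⊆ J} (-1)^{|J'|+1} ∏_{j ∈ J'} e_j`, where a product whose value in `E`
is `0` contributes `0`. -/
noncomputable def join {ι : Type} (s : Finset ι) (e : ι → E) : ZE E :=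
  rjoin s (fun j => elt (e j))

/-- Iterated product of a nonempty list in a semigroup with zero (the value on the
empty list is the junk value `0`). -/
def listProd : List E → E
  | [] => 0
  | [a] => a
  | a :: b :: l => a * listProd (b :: l)

/-- The product `∏_{j ∈ s} f j ∈ E` of a (nonempty) finite family. -/
noncomputable def eprod {ι : Type} (s : Finset ι) (f : ι → E) : E :=
  listProd (s.toList.map f)

/-- The support `E(x)` of `x ∈ ℤ[E^×]`: the finite set of elements of `E^×` appearing
with a nonzero coefficient in the reduced form of `x`. -/
noncomputable def supp (x : ZE E) : Finset E := x.1.coeff.support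

section Action

variable {Γ : Type} [Group Γ] [MulAction Γ E]

/-- The induced action of `g ∈ Γ` on `ℤ[E^×]`: the `ℤ`-linear map sending a basis
element `e ∈ E^×` to `g • e`.  (When the action fixes `0` — which is the case for an
action by semigroup automorphisms fixing `0` — the truncation `T` is a no-op, and this
is the automorphism of `ℤ[E^×]` induced by `τ_g`.) -/
noncomputable def act (g : Γ) (x : ZE E) : ZE E :=
  ⟨T (MonoidAlgebra.mapDomain (fun e : E => g • e) x.1), T_apply_zero _⟩

end Action



attribute [local instance] Classical.propDecidable

variable {E : Type} [SemilatticeWithZero E]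

/-- A Γ-semilattice structure: the group acts by semigroup automorphisms fixing `0`. -/
def IsGammaSL (Γ E : Type) [Group Γ] [SemilatticeWithZero E] [MulAction Γ E] : Prop :=
  (∀ (g : Γ) (x y : E), g • (x * y) = (g • x) * (g • y)) ∧ (∀ g : Γ, g • (0 : E) = 0)

/-- The set `E_φ`. -/
def Ephi {D : Type} [NonUnitalCommRing D] (φ : ZE E →ₙ+* D) : Set (ZE E) :=
  { x | ∃ (e : E) (J : Finset E), e ≠ 0 ∧ (∀ f ∈ J, f ≠ 0 ∧ f * e = f ∧ f ≠ e) ∧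
      x = elt e - join J (fun f => f) ∧
      φ (elt e) = rjoin J (fun f => φ (elt f)) }

/-- `R` is a finite cover for `e ∈ E^×`. -/
def IsCover (e : E) (R : Finset E) : Prop :=
  (∀ f ∈ R, f ≠ 0 ∧ f * e = f) ∧
  ∀ f' : E, f' ≠ 0 → f' * e = f' → ∃ f ∈ R, f' * f ≠ 0

/-- `ℛ` is a collection of finite covers for `E`. -/
def CovSystem (ℛ : E → Set (Finset E)) : Prop :=
  ∀ e : E, e ≠ 0 → ∀ R ∈ ℛ e, IsCover e R

/-- Condition (i). -/
def CondI (ℛ : E → Set (Finset E)) : Prop :=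
  ∀ d e : E, d ≠ 0 → e ≠ 0 → d * e ≠ 0 → ∀ R ∈ ℛ e,
    d * e ∈ (R.image (fun f => d * f)).erase 0 ∨ (R.image (fun f => d * f)).erase 0 ∈ ℛ (d * e)

/-- Condition (ii). -/
def CondII (ℛ : E → Set (Finset E)) : Prop :=
  ∀ e : E, e ≠ 0 → ∀ r : ℕ, 0 < r → ∀ Rs : Fin r → Finset E,
    Function.Injective Rs → (∀ i, Rs i ∈ ℛ e) → ∀ ε : Fin r → E,
    (∀ i, ε i ∈ supp (join (Rs i) (fun f => f))) → ∀ j : Fin r,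
      (if r = 1 then e else eprod (Finset.univ.erase j) ε) ≠ 0 →
      eprod Finset.univ ε * (if r = 1 then e else eprod (Finset.univ.erase j) ε)
          = eprod Finset.univ ε ∧
      eprod Finset.univ ε ≠ (if r = 1 then e else eprod (Finset.univ.erase j) ε)

/-- Condition (iii). -/
def CondIII (Γ : Type) [Group Γ] [MulAction Γ E] (ℛ : E → Set (Finset E)) : Prop :=
  ∀ (g : Γ) (e : E), e ≠ 0 →
    (fun R : Finset E => R.image (fun f => g • f)) '' (ℛ e) = ℛ (g • e)

/-- `e(𝒮) = ∏_{R ∈ 𝒮} (e - ⋁R) ∈ ℤ[E^×]`. -/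
noncomputable def eS (e : E) (S : Finset (Finset E)) : ZE E :=
  nprod S (fun R => elt e - join R (fun f => f))

/-- `E(E,ℛ) = {e(𝒮) : e ∈ E^×, 𝒮 ⊆ ℛ(e) nonempty finite} ∪ {0} ⊆ ℤ[E^×]`. -/
def EER (ℛ : E → Set (Finset E)) : Set (ZE E) :=
  {x | ∃ (e : E) (S : Finset (Finset E)), e ≠ 0 ∧ S.Nonempty ∧ ↑S ⊆ ℛ e ∧ x = eS e S} ∪ {0}

/-- `R(𝒮,R̃) = {e(𝒮 ∪ {R̃})} ∪ {f ⬝ e(𝒮) : f ∈ R̃, f ⬝ e(𝒮) ≠ 0}`. -/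
noncomputable def RSR (e : E) (S : Finset (Finset E)) (Rt : Finset E) : Finset (ZE E) :=
  insert (eS e (insert Rt S)) ((Rt.image (fun f => elt f * eS e S)).erase 0)

/-- The collection of finite covers `ℛ(E,ℛ)` on `E(E,ℛ)`, assigning to an element
`x = e(𝒮)` of `E(E,ℛ)^×` the covers `R(𝒮,R̃)`, `R̃ ∈ ℛ(e) ∖ 𝒮` (over all ways of
presenting `x` in the form `e(𝒮)`). -/
def RER (ℛ : E → Set (Finset E)) (x : ZE E) : Set (Finset (ZE E)) :=
  {C | ∃ (e : E) (S : Finset (Finset E)) (Rt : Finset E),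
        e ≠ 0 ∧ S.Nonempty ∧ ↑S ⊆ ℛ e ∧ Rt ∈ ℛ e ∧ Rt ∉ S ∧ x = eS e S ∧ C = RSR e S Rt}

/-- The `ℤ`-linear map `ℤ[E₁^×] → ℤ[E₂^×]` induced by a map `θ` from `E₁` to `ℤ[E₂^×]`,
sending a basis element `e' ∈ E₁^×` to `θ e'`. -/
noncomputable def indMap {E₁ E₂ : Type} [SemilatticeWithZero E₁] [SemilatticeWithZero E₂]
    (θ : E₁ → ZE E₂) : ZE E₁ →ₗ[ℤ] ZE E₂ :=
  (Finsupp.linearCombination ℤ θ).comp ((MonoidAlgebra.coeffLinearEquiv ℤ).toLinearMap.comp (ZS E₁).subtype.toIntLinearMap)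

/-- `(E₁, ℛ₁, θ)` is a realization of the construction `(E(E,ℛ), ℛ(E,ℛ))`:
`θ` identifies the abstract Γ-semilattice `E₁` with `E(E,ℛ) ⊆ ℤ[E^×]` (equivariantly,
multiplicatively and preserving `0`), and `ℛ₁` corresponds to `ℛ(E,ℛ)` under this
identification. -/
def Realizes {Γ E E₁ : Type} [Group Γ] [SemilatticeWithZero E] [MulAction Γ E]
    [SemilatticeWithZero E₁] [MulAction Γ E₁]
    (ℛ : E → Set (Finset E)) (ℛ₁ : E₁ → Set (Finset E₁)) (θ : E₁ → ZE E) : Prop :=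
  Function.Injective θ ∧ Set.range θ = EER ℛ ∧ θ 0 = 0 ∧
  (∀ x y : E₁, θ (x * y) = θ x * θ y) ∧
  (∀ (g : Γ) (x : E₁), θ (g • x) = act g (θ x)) ∧
  (∀ e' : E₁, e' ≠ 0 → ∀ C : Finset E₁, C ∈ ℛ₁ e' ↔ C.image θ ∈ RER ℛ (θ e'))

end IndRes

open IndRes


section AuxProofs

open Unitization Finset

variable {E : Type} [SemilatticeWithZero E] [DecidableEq E]

lemma elt_zero' : (elt (0 : E)) = 0 := by
  apply Subtype.ext
  show T (sgl (0 : E) 1) = 0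
  simp [T, sgl_apply_self]

lemma elt_mul' (d e : E) : elt d * elt e = elt (d * e) := by
  apply Subtype.ext
  rw [ZE.val_mul]
  show T (T (sgl d 1) * T (sgl e 1)) = T (sgl (d * e) 1)
  rw [T_mul_left, T_mul_right]
  congr 1
  show (MonoidAlgebra.single d (1 : ℤ)) * MonoidAlgebra.single e 1
      = MonoidAlgebra.single (d * e) 1
  rw [MonoidAlgebra.single_mul_single, one_mul]

lemma inr_nprod' {ι A : Type} [NonUnitalCommRing A] (s : Finset ι) (f : ι → A)
    (hs : s.Nonempty) :
    (Unitization.inr (nprod s f) : Unitization ℤ A)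
      = ∏ j ∈ s, (Unitization.inr (f j) : Unitization ℤ A) := by
  obtain ⟨j0, hj0⟩ := hs
  have hfst : (∏ j ∈ s, (Unitization.inr (f j) : Unitization ℤ A)).fst = 0 := by
    have h : (Unitization.fstHom ℤ A) (∏ j ∈ s, (Unitization.inr (f j) : Unitization ℤ A))
        = ∏ j ∈ s, (Unitization.fstHom ℤ A) (Unitization.inr (f j)) := map_prod (Unitization.fstHom ℤ A).toMonoidHom _ _
    have h2 : ∏ j ∈ s, (Unitization.fstHom ℤ A) (Unitization.inr (f j)) = 0 :=
      Finset.prod_eq_zero hj0 (by rfl)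
    exact h.trans h2
  have h3 := Unitization.inl_fst_add_inr_snd_eq
      (∏ j ∈ s, (Unitization.inr (f j) : Unitization ℤ A))
  rw [hfst, Unitization.inl_zero, zero_add] at h3
  exact h3

lemma inr_rjoin' {ι A : Type} [NonUnitalCommRing A] (s : Finset ι) (f : ι → A) :
    (Unitization.inr (rjoin s f) : Unitization ℤ A)
      = 1 - ∏ j ∈ s, (1 - (Unitization.inr (f j) : Unitization ℤ A)) := by
  classical
  have hexp : ∏ j ∈ s, (1 - (Unitization.inr (f j) : Unitization ℤ A))
      = ∑ t ∈ s.powerset, (-1 : Unitization ℤ A) ^ t.card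
          * ∏ j ∈ t, (Unitization.inr (f j) : Unitization ℤ A) := by
    have h := Finset.prod_add (fun j => -(Unitization.inr (f j) : Unitization ℤ A))
      (fun _ => (1 : Unitization ℤ A)) s
    simp only [Finset.prod_const_one, mul_one] at h
    calc ∏ j ∈ s, (1 - (Unitization.inr (f j) : Unitization ℤ A))
        = ∏ j ∈ s, (-(Unitization.inr (f j) : Unitization ℤ A) + 1) := by
          refine Finset.prod_congr rfl fun j _ => by ring
      _ = ∑ t ∈ s.powerset, ∏ j ∈ t, -(Unitization.inr (f j) : Unitization ℤ A) := h
      _ = _ := by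
          refine Finset.sum_congr rfl fun t _ => ?_
          rw [show (fun j => -(Unitization.inr (f j) : Unitization ℤ A))
              = fun j => (-1) * (Unitization.inr (f j) : Unitization ℤ A) by funext j; ring]
          rw [Finset.prod_mul_distrib, Finset.prod_const]
  have hsplit : ∑ t ∈ s.powerset, (-1 : Unitization ℤ A) ^ t.card
          * ∏ j ∈ t, (Unitization.inr (f j) : Unitization ℤ A)
      = (∑ t ∈ s.powerset.filter (fun t => t.Nonempty), (-1 : Unitization ℤ A) ^ t.card
          * ∏ j ∈ t, (Unitization.inr (f j) : Unitization ℤ A)) + 1 := by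
    rw [← Finset.sum_filter_add_sum_filter_not s.powerset (fun t => t.Nonempty)]
    congr 1
    have : s.powerset.filter (fun t => ¬ t.Nonempty) = {∅} := by
      ext t
      simp only [Finset.mem_filter, Finset.mem_powerset, Finset.mem_singleton,
        Finset.not_nonempty_iff_eq_empty]
      exact ⟨fun h => h.2, fun h => ⟨by simp [h], h⟩⟩
    rw [this]
    simp
  have hL : (Unitization.inr (rjoin s f) : Unitization ℤ A)
      = ∑ t ∈ s.powerset.filter (fun t => t.Nonempty),
          ((-1 : ℤ) ^ (t.card + 1)) • (Unitization.inr (nprod t f) : Unitization ℤ A) := by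
    show (Unitization.inrNonUnitalAlgHom ℤ A) (rjoin s f) = _
    unfold rjoin
    rw [map_sum]
    refine Finset.sum_congr rfl fun t _ => ?_
    exact map_zsmul (Unitization.inrNonUnitalAlgHom ℤ A).toDistribMulActionHom.toAddMonoidHom _ _
  rw [hL, hexp, hsplit]
  have : ∀ t ∈ s.powerset.filter (fun t => t.Nonempty),
      ((-1 : ℤ) ^ (t.card + 1)) • (Unitization.inr (nprod t f) : Unitization ℤ A)
        = -((-1 : Unitization ℤ A) ^ t.card
            * ∏ j ∈ t, (Unitization.inr (f j) : Unitization ℤ A)) := by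
    intro t ht
    obtain ⟨-, hne⟩ := Finset.mem_filter.mp ht
    rw [inr_nprod' t f hne, zsmul_eq_mul]
    push_cast
    rw [show (((-1:ℤ) ^ (t.card + 1) : ℤ) : Unitization ℤ A) = (-1) ^ (t.card+1) from by norm_num]
    ring
  rw [Finset.sum_congr rfl this]
  rw [Finset.sum_neg_distrib]
  ring

lemma absorb_prod' {U : Type} [CommRing U] {ι : Type} (P : U) (s : Finset ι) (Q : ι → U)
    (h : ∀ g ∈ s, P * Q g = Q g) : (1 - P) * ∏ g ∈ s, (1 - Q g) = 1 - P := by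
  classical
  induction s using Finset.induction_on with
  | empty => simp
  | @insert a s ha ih =>
    rw [Finset.prod_insert ha, ← mul_assoc]
    have h1 : (1 - P) * (1 - Q a) = 1 - P := by
      linear_combination h a (Finset.mem_insert_self a s)
    rw [h1]
    exact ih fun g hg => h g (Finset.mem_insert_of_mem hg)

lemma d_absorb (d f : E) : d * (d * f) = d * f := by
  rw [← mul_assoc, SemilatticeWithZero.mul_idem]

lemma sl_calc (d e f : E) (hfe : f * e = f) : (d * f) * (d * e) = d * f := by
  rw [mul_mul_mul_comm, SemilatticeWithZero.mul_idem, hfe]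

lemma prod_shift' {U : Type} [CommRing U] (d : E) (P : U) (X : E → U)
    (hX0 : X 0 = 0) (hPX : ∀ f, P * X f = X (d * f)) (hXX : ∀ f, X f * X f = X f)
    (J : Finset E) :
    P * ∏ f ∈ J, (1 - X f) = P * ∏ g ∈ (J.image fun f => d * f).erase 0, (1 - X g) := by
  classical
  induction J using Finset.induction_on with
  | empty => simp
  | @insert a J ha ih =>
    have hstep : P * (1 - X a) = (1 - X (d * a)) * P := by
      have h1 := hPX a
      have h2 := hPX (d * a)
      rw [d_absorb] at h2
      linear_combination h2 - h1
    rw [Finset.prod_insert ha, ← mul_assoc, hstep, mul_assoc, ih]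
    by_cases hda : d * a = 0
    · rw [show ((insert a J).image fun f => d * f) = insert 0 (J.image fun f => d * f) by
        rw [Finset.image_insert, hda]]
      rw [Finset.erase_insert_eq_erase, hda, hX0]
      ring
    · rw [show ((insert a J).image fun f => d * f)
          = insert (d * a) (J.image fun f => d * f) by rw [Finset.image_insert]]
      rw [Finset.erase_insert_of_ne hda]
      by_cases hmem : d * a ∈ (J.image fun f => d * f).erase 0
      · rw [Finset.insert_eq_self.mpr hmem]
        rw [← Finset.mul_prod_erase _ _ hmem]
        have hsq : (1 - X (d * a)) * (1 - X (d * a)) = 1 - X (d * a) := by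
          linear_combination hXX (d * a)
        calc (1 - X (d * a)) * (P * ((1 - X (d * a))
              * ∏ g ∈ ((J.image fun f => d * f).erase 0).erase (d * a), (1 - X g)))
            = ((1 - X (d * a)) * (1 - X (d * a))) * (P
              * ∏ g ∈ ((J.image fun f => d * f).erase 0).erase (d * a), (1 - X g)) := by ring
          _ = _ := by rw [hsq]; ring
      · rw [Finset.prod_insert hmem]
        ring

lemma mul_rjoin' {A : Type} [NonUnitalCommRing A] (q : E → A) (d : E) (p : A)
    (hq0 : q 0 = 0) (hpq : ∀ f, p * q f = q (d * f)) (hidem : ∀ f, q f * q f = q f)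
    (J : Finset E) :
    p * rjoin J q = rjoin ((J.image fun f => d * f).erase 0) q := by
  classical
  apply Unitization.inr_injective (R := ℤ)
  rw [Unitization.inr_mul, inr_rjoin', inr_rjoin']
  set X : E → Unitization ℤ A := fun f => Unitization.inr (q f) with hX
  have hX0 : X 0 = 0 := by simp [hX, hq0]
  have hPX : ∀ f, (Unitization.inr p : Unitization ℤ A) * X f = X (d * f) := fun f => by
    rw [hX]; simp only [← Unitization.inr_mul, hpq]
  have hXX : ∀ f, X f * X f = X f := fun f => by
    rw [hX]; simp only [← Unitization.inr_mul, hidem]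
  have hA := prod_shift' d (Unitization.inr p : Unitization ℤ A) X hX0 hPX hXX J
  have hB := absorb_prod' (Unitization.inr p : Unitization ℤ A)
      ((J.image fun f => d * f).erase 0) X (by
    intro g hg
    obtain ⟨-, hgim⟩ := Finset.mem_erase.mp hg
    obtain ⟨f, -, rfl⟩ := Finset.mem_image.mp hgim
    rw [hPX, d_absorb])
  linear_combination hB - hA

lemma rjoin_eq_of_max' {A : Type} [NonUnitalCommRing A] (q : E → A) (s : Finset E) (m : E)
    (hm : m ∈ s) (habs : ∀ g ∈ s, q m * q g = q g) : rjoin s q = q m := by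
  classical
  apply Unitization.inr_injective (R := ℤ)
  rw [inr_rjoin', ← Finset.mul_prod_erase _ _ hm]
  have hB := absorb_prod' (Unitization.inr (q m) : Unitization ℤ A) (s.erase m)
      (fun g => (Unitization.inr (q g) : Unitization ℤ A)) (by
    intro g hg
    rw [← Unitization.inr_mul, habs g (Finset.mem_of_mem_erase hg)])
  linear_combination - hB

lemma rjoin_empty' {A : Type} [NonUnitalCommRing A] (q : E → A) :
    rjoin (∅ : Finset E) q = 0 := by
  unfold rjoin
  rw [Finset.powerset_empty, Finset.filter_singleton]
  simp

end AuxProofs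

theorem statement_1 {E D : Type} [SemilatticeWithZero E] [NonUnitalCommRing D]
    (hD : NonUnitalAlgebra.adjoin ℤ {d : D | d * d = d} = ⊤)
    (φ : ZE E →ₙ+* D) :
    ∀ d : E, ∀ x ∈ Ephi φ, elt d * x ∈ Ephi φ ∪ {0} := by
  classical
  intro d x hx
  obtain ⟨e, J, he, hJmem, hxeq, hphi⟩ := hx
  have hidE : ∀ f : E, elt f * elt f = elt f := fun f => by
    rw [elt_mul', SemilatticeWithZero.mul_idem]
  have hmul : elt d * join J (fun f => f)
      = join ((J.image fun f => d * f).erase 0) (fun f => f) := by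
    unfold join
    exact mul_rjoin' (fun f => elt f) d (elt d) elt_zero' (fun f => elt_mul' d f) hidE J
  have hprod : elt d * x
      = elt (d * e) - join ((J.image fun f => d * f).erase 0) (fun f => f) := by
    rw [hxeq, mul_sub, elt_mul', hmul]
  by_cases hde : d * e = 0
  · refine Set.mem_union_right _ ?_
    have hJ' : ((J.image fun f => d * f).erase 0) = ∅ := by
      refine Finset.eq_empty_iff_forall_notMem.mpr fun g hg => ?_
      obtain ⟨hg0, hgim⟩ := Finset.mem_erase.mp hg
      obtain ⟨f, hf, rfl⟩ := Finset.mem_image.mp hgim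
      refine hg0 ?_
      have hfe := (hJmem f hf).2.1
      calc d * f = d * (f * e) := by rw [hfe]
        _ = (d * e) * f := by rw [mul_comm f e, ← mul_assoc]
        _ = 0 := by rw [hde, SemilatticeWithZero.zero_mul]
    show elt d * x = 0
    rw [hprod, hJ', hde, elt_zero']
    unfold join
    rw [rjoin_empty', sub_zero]
  · by_cases hcol : ∃ f ∈ J, d * f = d * e
    · refine Set.mem_union_right _ ?_
      obtain ⟨f0, hf0J, hf0⟩ := hcol
      have hmem : d * e ∈ (J.image fun f => d * f).erase 0 :=
        Finset.mem_erase.mpr ⟨hde, Finset.mem_image.mpr ⟨f0, hf0J, hf0⟩⟩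
      have hmax : rjoin ((J.image fun f => d * f).erase 0) (fun f => elt f)
          = elt (d * e) := by
        refine rjoin_eq_of_max' _ _ _ hmem fun g hg => ?_
        obtain ⟨-, hgim⟩ := Finset.mem_erase.mp hg
        obtain ⟨f, hf, rfl⟩ := Finset.mem_image.mp hgim
        rw [elt_mul', mul_comm (d * e) (d * f), sl_calc d e f (hJmem f hf).2.1]
      show elt d * x = 0
      rw [hprod]
      unfold join
      rw [hmax, sub_self]
    · refine Set.mem_union_left _ ?_
      refine ⟨d * e, (J.image fun f => d * f).erase 0, hde, ?_, hprod, ?_⟩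
      · intro g hg
        obtain ⟨hg0, hgim⟩ := Finset.mem_erase.mp hg
        obtain ⟨f, hf, rfl⟩ := Finset.mem_image.mp hgim
        exact ⟨hg0, sl_calc d e f (hJmem f hf).2.1, fun hcontra => hcol ⟨f, hf, hcontra⟩⟩
      · have h1 : φ (elt (d * e)) = φ (elt d) * φ (elt e) := by
          rw [← elt_mul', map_mul]
        rw [h1, hphi]
        exact mul_rjoin' (fun f => φ (elt f)) d (φ (elt d))
          (by show φ (elt (0 : E)) = 0; rw [elt_zero', map_zero])
          (fun f => by
            show φ (elt d) * φ (elt f) = φ (elt (d * f))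
            rw [← map_mul, elt_mul'])
          (fun f => by
            show φ (elt f) * φ (elt f) = φ (elt f)
            rw [← map_mul, hidE f]) J
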